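/- With P⁼ the equality projector on two n-qubit registers X,Y and P̄ = |Φ⟩⟨Φ| the uniform-superposition projector on Y, the operator norm of the commutator [P⁼, 1_X ⊗ P̄] is at most 2·2^{−n/2}. -/

import Mathlib

open scoped Matrix

set_option maxHeartbeats 1000000
set_option synthInstance.maxHeartbeats 400000

/-- The equality projector on two `n`-qubit registers `X, Y`:
`P⁼ = ∑_x |x⟩⟨x|_X ⊗ |x⟩⟨x|_Y`. -/
noncomputable def eqProj (n : ℕ) :
    Matrix ((Fin n → Bool) × (Fin n → Bool)) ((Fin n → Bool) × (Fin n → Bool)) ℂ :=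
  fun p q => if p.1 = p.2 ∧ q = p then 1 else 0

/-- The projector `1_X ⊗ |Φ⟩⟨Φ|_Y` where `|Φ⟩ = 2^{−n/2} ∑_x |x⟩` is the uniform
superposition on the `n`-qubit register `Y`. -/
noncomputable def unifProjY (n : ℕ) :
    Matrix ((Fin n → Bool) × (Fin n → Bool)) ((Fin n → Bool) × (Fin n → Bool)) ℂ :=
  fun p q => if p.1 = q.1 then ((2 : ℂ) ^ n)⁻¹ else 0

lemma eqProj_star (n : ℕ) : (eqProj n)ᴴ = eqProj n := by
  ext p q
  simp only [Matrix.conjTranspose_apply, eqProj, apply_ite (star : ℂ → ℂ), star_one, star_zero]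
  by_cases h : q.1 = q.2 ∧ p = q
  · rw [if_pos h, if_pos]
    refine ⟨?_, h.2.symm⟩
    rw [h.2]; exact h.1
  · rw [if_neg h, if_neg]
    intro hc
    refine h ⟨?_, hc.2.symm⟩
    rw [hc.2]; exact hc.1

lemma unifProjY_star (n : ℕ) : (unifProjY n)ᴴ = unifProjY n := by
  ext p q
  simp [unifProjY, Matrix.conjTranspose_apply, eq_comm, apply_ite (starRingEnd ℂ), map_inv₀,
    map_pow, Complex.conj_ofNat]

lemma eqProj_sq (n : ℕ) : eqProj n * eqProj n = eqProj n := by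
  ext p q
  rw [Matrix.mul_apply, Finset.sum_eq_single q]
  · simp only [eqProj]
    split_ifs with h1 h2 h3 <;> try ring
    exfalso
    apply h2
    constructor
    · rw [h1.2]; exact h1.1
    · trivial
  · intro r _ hr
    simp only [eqProj]
    have : ¬(r.1 = r.2 ∧ q = r) := fun hc => hr hc.2.symm
    rw [if_neg this, mul_zero]
  · intro h
    exact absurd (Finset.mem_univ q) h

lemma unifProjY_sq (n : ℕ) : unifProjY n * unifProjY n = unifProjY n := by
  have hN : ((2 : ℂ) ^ n) ≠ 0 := pow_ne_zero n two_ne_zero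
  ext p q
  simp only [Matrix.mul_apply, unifProjY, Fintype.sum_prod_type, ite_mul, zero_mul,
    mul_ite, mul_zero]
  have h1 : ∀ x : Fin n → Bool,
      (∑ _x1 : Fin n → Bool,
          if x = q.1 then if p.1 = x then ((2:ℂ)^n)⁻¹ * ((2:ℂ)^n)⁻¹ else 0 else 0)
      = (if x = q.1 then
          if p.1 = x then (2:ℂ)^n * (((2:ℂ)^n)⁻¹ * ((2:ℂ)^n)⁻¹) else 0 else 0) := by
    intro x
    rw [Finset.sum_const, Finset.card_univ]
    simp [Fintype.card_fun, mul_comm, mul_ite, mul_zero]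
  rw [Finset.sum_congr rfl (fun x _ => h1 x), Finset.sum_ite_eq']
  simp only [Finset.mem_univ, if_true]
  split_ifs with h
  · field_simp
  · rfl

lemma eqProj_mul_unifProjY (n : ℕ) :
    eqProj n * unifProjY n =
      fun p q => if p.1 = p.2 ∧ p.1 = q.1 then ((2:ℂ)^n)⁻¹ else 0 := by
  ext p q
  rw [Matrix.mul_apply, Finset.sum_eq_single p]
  · simp only [eqProj, unifProjY, ite_and]
    by_cases h1 : p.1 = p.2
    · simp [h1]
    · simp [h1]
  · intro r _ hr
    simp only [eqProj]
    have : ¬(p.1 = p.2 ∧ r = p) := fun hc => hr hc.2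
    rw [if_neg this, zero_mul]
  · intro h
    exact absurd (Finset.mem_univ p) h

lemma key_identity (n : ℕ) :
    unifProjY n * (eqProj n * unifProjY n) = ((2:ℂ)^n)⁻¹ • unifProjY n := by
  rw [eqProj_mul_unifProjY]
  ext p q
  erw [Matrix.mul_apply, Finset.sum_eq_single ((p.1, p.1) :
        (Fin n → Bool) × (Fin n → Bool))]
  · by_cases h : p.1 = q.1
    · simp [unifProjY, Matrix.smul_apply, smul_eq_mul, h]
    · simp [unifProjY, Matrix.smul_apply, smul_eq_mul, h]
  · intro r _ hr
    show (unifProjY n) p r * _ = 0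
    by_cases h1 : p.1 = r.1
    · have hcond : ¬(r.1 = r.2 ∧ r.1 = q.1) := by
        rintro ⟨h2, -⟩
        exact hr (Prod.ext h1.symm (by rw [← h2, ← h1]))
      rw [if_neg hcond, mul_zero]
    · show (if p.1 = r.1 then ((2:ℂ)^n)⁻¹ else 0) * _ = 0
      rw [if_neg h1, zero_mul]
  · intro h
    exact absurd (Finset.mem_univ _) h

open scoped Matrix.Norms.L2Operator in
/-- `‖[P⁼, 1_X ⊗ |Φ⟩⟨Φ|_Y]‖ ≤ 2·2^{−n/2}` (operator norm of the commutator). -/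
theorem stmt_3 (n : ℕ) :
    ‖Matrix.toEuclideanCLM (𝕜 := ℂ)
        (eqProj n * unifProjY n - unifProjY n * eqProj n)‖ ≤
      2 * (2 : ℝ) ^ (-(n : ℝ) / 2) := by
  rw [← Matrix.cstar_norm_def]
  have hBle : ‖unifProjY n‖ ≤ 1 := by
    have h1 := Matrix.l2_opNorm_conjTranspose_mul_self (unifProjY n)
    rw [unifProjY_star, unifProjY_sq] at h1
    nlinarith [norm_nonneg (unifProjY n)]
  have hct : ((2:ℝ)^n)⁻¹ = (2 : ℝ) ^ (-(n : ℝ) / 2) * (2 : ℝ) ^ (-(n : ℝ) / 2) := by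
    rw [← Real.rpow_add two_pos]
    have h2 : -(n : ℝ) / 2 + -(n : ℝ) / 2 = -(n : ℝ) := by ring
    rw [h2, Real.rpow_neg (by norm_num : (0:ℝ) ≤ 2), Real.rpow_natCast]
  have ht0 : (0:ℝ) ≤ (2 : ℝ) ^ (-(n : ℝ) / 2) := Real.rpow_nonneg (by norm_num) _
  have hsq : ‖eqProj n * unifProjY n‖ * ‖eqProj n * unifProjY n‖ ≤
      (2 : ℝ) ^ (-(n : ℝ) / 2) * (2 : ℝ) ^ (-(n : ℝ) / 2) := by
    rw [← Matrix.l2_opNorm_conjTranspose_mul_self, Matrix.conjTranspose_mul,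
      unifProjY_star, eqProj_star]
    have hassoc : unifProjY n * eqProj n * (eqProj n * unifProjY n)
        = ((2:ℂ)^n)⁻¹ • unifProjY n := by
      rw [mul_assoc, ← mul_assoc (eqProj n), eqProj_sq, key_identity]
    rw [hassoc, norm_smul, ← hct]
    have hc : ‖((2:ℂ)^n)⁻¹‖ = ((2:ℝ)^n)⁻¹ := by
      rw [norm_inv, norm_pow, Complex.norm_ofNat]
    rw [hc]
    have h0 : (0:ℝ) ≤ ((2:ℝ)^n)⁻¹ := by positivity
    nlinarith
  have hAB : ‖eqProj n * unifProjY n‖ ≤ (2 : ℝ) ^ (-(n : ℝ) / 2) := by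
    nlinarith [norm_nonneg (eqProj n * unifProjY n)]
  have hBA : ‖unifProjY n * eqProj n‖ ≤ (2 : ℝ) ^ (-(n : ℝ) / 2) := by
    have : unifProjY n * eqProj n = (eqProj n * unifProjY n)ᴴ := by
      rw [Matrix.conjTranspose_mul, unifProjY_star, eqProj_star]
    rw [this, Matrix.l2_opNorm_conjTranspose]
    exact hAB
  calc ‖eqProj n * unifProjY n - unifProjY n * eqProj n‖
      ≤ ‖eqProj n * unifProjY n‖ + ‖unifProjY n * eqProj n‖ := norm_sub_le _ _
    _ ≤ (2 : ℝ) ^ (-(n : ℝ) / 2) + (2 : ℝ) ^ (-(n : ℝ) / 2) := add_le_add hAB hBA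
    _ = 2 * (2 : ℝ) ^ (-(n : ℝ) / 2) := by ring
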